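/- arXiv:2403.18440 — 5 statements merged into one kernel-verified Lean document; each statement's English description precedes it below -/
import Mathlib

section
/- Let (X,d,μ) be a metric measure space, (U,φ) an n-dimensional chart on X, and 𝒞 a collection of metric spaces containing a space Y₀ with a non-trivial geodesic (an isometric embedding γ : [a,b] → Y₀ with a < b). If for every Y ∈ 𝒞, every Lipschitz map U → Y admits a metric differential with respect to (U,φ), then every real-valued Lipschitz function f : U → ℝ admits a metric differential with respect to (U,φ). -/
open MeasureTheory Filter Set Metric
open scoped ENNReal NNReal Topology RealInnerProductSpace

noncomputable section

abbrev Euc (n : ℕ) : Type := EuclideanSpace ℝ (Fin n)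

/-- The pointwise Lipschitz constant of `g` at `x`, restricted to the set `s`. -/
def lipWithin {X Y : Type*} [MetricSpace X] [MetricSpace Y]
    (g : X → Y) (s : Set X) (x : X) : ℝ :=
  Filter.limsup (fun y => dist (g y) (g x) / dist y x) (𝓝[s \ {x}] x)

/-- `p : ℝⁿ → ℝ` is (the function of) a seminorm. -/
def IsSeminormFn {n : ℕ} (p : Euc n → ℝ) : Prop :=
  ∃ s : Seminorm ℝ (Euc n), ∀ v, p v = s v

/-- `f : A ⊂ X → Y` admits a metric differential with respect to the chart `(U, φ)`. -/
def HasMetricDiff {X Y : Type*} [MetricSpace X] [MeasurableSpace X] [MetricSpace Y] {n : ℕ}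
    (μ : Measure X) (U : Set X) (φ : X → Euc n) (A : Set X) (f : X → Y) : Prop :=
  ∃ md : X → Euc n → ℝ,
    (∀ x ∈ A ∩ U, IsSeminormFn (md x)) ∧
    (∀ v : Euc n, Measurable fun x => md x v) ∧
    ∀ᵐ x ∂μ.restrict (A ∩ U),
      Tendsto (fun y => |dist (f y) (f x) - md x (φ y - φ x)| / dist y x)
        (𝓝[A \ {x}] x) (𝓝 0)

/-- `(U, φ)` is an `n`-dimensional chart. -/
def IsChart {X : Type*} [MetricSpace X] [MeasurableSpace X] {n : ℕ}
    (μ : Measure X) (U : Set X) (φ : X → Euc n) : Prop :=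
  MeasurableSet U ∧ 0 < μ U ∧ ∃ K : ℝ≥0, LipschitzWith K φ

/-- Condition (*): all directional slopes of `φ` are positive a.e. on `U`. -/
def ChartStar {X : Type*} [MetricSpace X] [MeasurableSpace X] {n : ℕ}
    (μ : Measure X) (U : Set X) (φ : X → Euc n) : Prop :=
  ∀ v : Euc n, ‖v‖ = 1 →
    ∀ᵐ x ∂μ.restrict U, 0 < lipWithin (fun y => (inner ℝ v (φ y) : ℝ)) U x

/-- `f` is `L`-bi-Lipschitz on `s`. -/
def BiLipschitzOn {X Y : Type*} [MetricSpace X] [MetricSpace Y]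
    (L : ℝ) (f : X → Y) (s : Set X) : Prop :=
  ∀ x ∈ s, ∀ y ∈ s, L⁻¹ * dist x y ≤ dist (f x) (f y) ∧ dist (f x) (f y) ≤ L * dist x y

/-- `(X, d, μ)` is `n`-rectifiable. -/
def IsRectifiable (n : ℕ) (X : Type*) [MetricSpace X] [MeasurableSpace X] [BorelSpace X]
    (μ : Measure X) : Prop :=
  μ ≪ μH[(n : ℝ)] ∧
  ∃ (E : ℕ → Set (Euc n)) (ψ : ℕ → Euc n → X) (K : ℕ → ℝ≥0),
    (∀ i, MeasurableSet (E i)) ∧ (∀ i, LipschitzOnWith (K i) (ψ i) (E i)) ∧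
    μ ((⋃ i, ψ i '' E i)ᶜ) = 0

/-- `(U, φ)` is a weak Cheeger chart: every Lipschitz function `X → ℝ` has a unique
linear differential at `μ`-a.e. point of `U`, with the limit taken within `U`. -/
def IsWeakCheegerChart {X : Type*} [MetricSpace X] [MeasurableSpace X] {n : ℕ}
    (μ : Measure X) (U : Set X) (φ : X → Euc n) : Prop :=
  IsChart μ U φ ∧
  ∀ (f : X → ℝ) (K : ℝ≥0), LipschitzWith K f →
    ∀ᵐ x ∂μ.restrict U, ∃! L : Euc n →ₗ[ℝ] ℝ,
      Tendsto (fun y => |f y - f x - L (φ y - φ x)| / dist y x) (𝓝[U \ {x}] x) (𝓝 0)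

/-- `(U, φ)` is a Cheeger chart: as a weak Cheeger chart, but with the limit
taken in all of `X`. -/
def IsCheegerChart {X : Type*} [MetricSpace X] [MeasurableSpace X] {n : ℕ}
    (μ : Measure X) (U : Set X) (φ : X → Euc n) : Prop :=
  IsChart μ U φ ∧
  ∀ (f : X → ℝ) (K : ℝ≥0), LipschitzWith K f →
    ∀ᵐ x ∂μ.restrict U, ∃! L : Euc n →ₗ[ℝ] ℝ,
      Tendsto (fun y => |f y - f x - L (φ y - φ x)| / dist y x) (𝓝[≠] x) (𝓝 0)


/-- **Lemma:** if the collection `(Y i)` contains a space with a non-trivial geodesic and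
every Lipschitz map `U → Y i` admits a metric differential w.r.t. the chart `(U, φ)`, then
every real-valued Lipschitz function on `U` admits a metric differential w.r.t. `(U, φ)`. -/
theorem real_metric_diff_of_geodesic_target {X : Type*} [MetricSpace X] [CompleteSpace X] [TopologicalSpace.SeparableSpace X]
    [MeasurableSpace X] [BorelSpace X]
    (μ : Measure X) (hμ : ∀ s : Set X, Bornology.IsBounded s → μ s ≠ ∞)
    {n : ℕ} (U : Set X) (φ : X → Euc n) (hchart : IsChart μ U φ)
    {ι : Type*} (Y : ι → Type*) [∀ i, MetricSpace (Y i)]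
    (hgeod : ∃ (i₀ : ι) (a b : ℝ) (γ : ℝ → Y i₀), a < b ∧
      ∀ s ∈ Set.Icc a b, ∀ t ∈ Set.Icc a b, dist (γ s) (γ t) = |s - t|)
    (hdiff : ∀ (i : ι) (f : X → Y i) (K : ℝ≥0), LipschitzOnWith K f U →
      HasMetricDiff μ U φ U f) :
    ∀ (f : X → ℝ) (K : ℝ≥0), LipschitzOnWith K f U → HasMetricDiff μ U φ U f := by
  obtain ⟨i₀, a, b, γ, hab, hγ⟩ := hgeod
  intro f K hf
  -- extend f to a Lipschitz function F on all of X
  obtain ⟨F, hF, hfF⟩ := hf.extend_real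
  set c : ℝ := (b - a) / 3 with hc_def
  have hc : 0 < c := by rw [hc_def]; linarith
  have hb3 : b = a + 3 * c := by rw [hc_def]; ring
  -- the clamp function
  set clamp : ℝ → ℝ := fun t => min 2 (max (-1) t) with hclamp_def
  have clamp_mem : ∀ t, clamp t ∈ Set.Icc (-1 : ℝ) 2 := fun t =>
    ⟨le_min (by norm_num) (le_max_left _ _), min_le_left _ _⟩
  have clamp_eq : ∀ t ∈ Set.Icc (-1 : ℝ) 2, clamp t = t := by
    intro t ht
    simp only [hclamp_def]
    rw [max_eq_right ht.1, min_eq_right ht.2]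
  have clamp_lip : LipschitzWith 1 clamp := (LipschitzWith.id.const_max _).const_min _
  -- the auxiliary maps
  set h : ℤ → X → ℝ := fun k x => a + c * (1 + clamp (F x - k)) with hh_def
  have h_mem : ∀ k x, h k x ∈ Set.Icc a b := by
    intro k x
    have h1 := (clamp_mem (F x - k)).1
    have h2 := (clamp_mem (F x - k)).2
    simp only [hh_def]
    constructor
    · nlinarith
    · nlinarith
  set g : ℤ → X → Y i₀ := fun k x => γ (h k x) with hg_def
  have hdist_g : ∀ k x y, dist (g k y) (g k x) = |h k y - h k x| := fun k x y =>
    hγ _ (h_mem k y) _ (h_mem k x)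
  have hdist_le : ∀ k x y, |h k y - h k x| ≤ c * |F y - F x| := by
    intro k x y
    have := clamp_lip.dist_le_mul (F y - k) (F x - k)
    simp only [Real.dist_eq, NNReal.coe_one, one_mul] at this
    have h2 : (F y - k) - (F x - k) = F y - F x := by ring
    rw [h2] at this
    have : |clamp (F y - k) - clamp (F x - k)| ≤ |F y - F x| := this
    calc |h k y - h k x| = c * |clamp (F y - k) - clamp (F x - k)| := by
          rw [← abs_of_pos hc, ← abs_mul]; ring_nf
          congr 1; simp only [hh_def]; ring
      _ ≤ c * |F y - F x| := mul_le_mul_of_nonneg_left this hc.le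
  -- every g k has a metric differential
  have H : ∀ k : ℤ, HasMetricDiff μ U φ U (g k) := by
    intro k
    apply hdiff i₀ (g k) (Real.toNNReal c * K)
    apply LipschitzOnWith.of_dist_le_mul
    intro x hx y hy
    rw [hdist_g k y x]
    calc |h k x - h k y| ≤ c * |F x - F y| := hdist_le k y x
      _ ≤ c * (K * dist x y) := by
          apply mul_le_mul_of_nonneg_left _ hc.le
          have := hF.dist_le_mul x y
          rwa [Real.dist_eq] at this
      _ = ↑(Real.toNNReal c * K) * dist x y := by
          rw [NNReal.coe_mul, Real.coe_toNNReal _ hc.le]; ring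
  choose md' hsem hmeas htend using H
  -- the metric differential of f
  refine ⟨fun x v => c⁻¹ * md' ⌊F x⌋ x v, ?_, ?_, ?_⟩
  · -- seminorm
    intro x hx
    obtain ⟨s, hs⟩ := hsem ⌊F x⌋ x hx
    refine ⟨(Real.toNNReal c⁻¹) • s, fun v => ?_⟩
    show c⁻¹ * md' ⌊F x⌋ x v = _
    rw [Seminorm.smul_apply, hs v, NNReal.smul_def, smul_eq_mul,
      Real.coe_toNNReal _ (inv_nonneg.mpr hc.le)]
  · -- measurability
    intro v
    apply Measurable.const_mul
    have hG : Measurable fun p : X × ℤ => md' p.2 p.1 v :=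
      measurable_from_prod_countable_left fun k => hmeas k v
    exact hG.comp (measurable_id.prodMk ((hF.continuous.measurable).floor))
  · -- a.e. convergence
    have hall : ∀ᵐ x ∂μ.restrict (U ∩ U), ∀ k : ℤ,
        Tendsto (fun y => |dist (g k y) (g k x) - md' k x (φ y - φ x)| / dist y x)
          (𝓝[U \ {x}] x) (𝓝 0) := ae_all_iff.mpr htend
    have hmemU : ∀ᵐ x ∂μ.restrict (U ∩ U), x ∈ U ∩ U :=
      ae_restrict_mem (hchart.1.inter hchart.1)
    filter_upwards [hall, hmemU] with x hx hxU
    set k : ℤ := ⌊F x⌋ with hk_def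
    have hge : (k : ℝ) ≤ F x := Int.floor_le (F x)
    have hlt : F x < (k : ℝ) + 1 := Int.lt_floor_add_one (F x)
    have hf0 : F x - k ∈ Set.Icc (-1 : ℝ) 2 := ⟨by linarith, by linarith⟩
    have key : ∀ᶠ y in 𝓝[U \ {x}] x,
        |dist (f y) (f x) - c⁻¹ * md' k x (φ y - φ x)| / dist y x
          = c⁻¹ * (|dist (g k y) (g k x) - md' k x (φ y - φ x)| / dist y x) := by
      have h1 : ∀ᶠ y in 𝓝[U \ {x}] x, y ∈ U \ {x} := self_mem_nhdsWithin
      have h2 : ∀ᶠ y in 𝓝 x, |F y - F x| < 1 :=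
        (hF.continuous.tendsto x).eventually (eventually_abs_sub_lt (F x) one_pos)
      filter_upwards [h1, nhdsWithin_le_nhds h2] with y hy hFy
      have hyU : y ∈ U := hy.1
      have hfy : f y = F y := hfF hyU
      have hfx : f x = F x := hfF hxU.1
      have hfy0 : F y - k ∈ Set.Icc (-1 : ℝ) 2 := by
        have h2' := abs_lt.mp hFy
        exact ⟨by linarith [h2'.1], by linarith [h2'.2]⟩
      have hgkdist : dist (g k y) (g k x) = c * dist (f y) (f x) := by
        rw [hdist_g, hh_def]
        simp only
        rw [clamp_eq _ hfy0, clamp_eq _ hf0, Real.dist_eq, hfy, hfx,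
          show a + c * (1 + (F y - ↑k)) - (a + c * (1 + (F x - ↑k)))
              = c * (F y - F x) by ring,
          abs_mul, abs_of_pos hc]
      rw [hgkdist]
      rw [show dist (f y) (f x) - c⁻¹ * md' k x (φ y - φ x)
            = c⁻¹ * (c * dist (f y) (f x) - md' k x (φ y - φ x)) by
          field_simp]
      rw [abs_mul, abs_of_pos (inv_pos.mpr hc)]
      ring
    have := (hx k).const_mul c⁻¹
    rw [mul_zero] at this
    exact Tendsto.congr' (key.mono fun y hy => hy.symm) this

end
end

section
/- Let (X,d,μ) be a metric measure space, (U,φ) a weak Cheeger chart of dimension n on X, and V a separable Banach space. Then every Lipschitz map f : U → V* (V* the dual Banach space) is w*-differentiable with respect to (U,φ): for μ-a.e. x ∈ U there exists a unique linear map D_x f : ℝⁿ → V* such that for every v ∈ V, limsup_{U ∋ y → x} |⟨v, f(y) − f(x) − D_x f(φ(y) − φ(x))⟩| / d(y,x) = 0. -/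
open MeasureTheory Filter Set Metric
open scoped ENNReal NNReal Topology RealInnerProductSpace

noncomputable section

section AuxLemmas

variable {α : Type*} {l : Filter α}

private lemma aux_tendsto_zero {F : α → ℝ} (h0 : ∀ y, 0 ≤ F y)
    (h : ∀ ε > 0, ∀ᶠ y in l, F y ≤ ε) : Tendsto F l (𝓝 0) := by
  rw [Metric.tendsto_nhds]
  intro ε hε
  filter_upwards [h (ε / 2) (by positivity)] with y hy
  rw [Real.dist_eq, sub_zero, abs_of_nonneg (h0 y)]
  linarith

private lemma aux_limsup_le [l.NeBot] {A F : α → ℝ} {C : ℝ}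
    (h0 : ∀ y, 0 ≤ F y) (hA : Tendsto A l (𝓝 0)) (h : ∀ᶠ y in l, F y ≤ A y + C) :
    limsup F l ≤ C := by
  refine le_of_forall_pos_le_add fun ε hε => ?_
  refine limsup_le_of_le (isCoboundedUnder_le_of_le l h0) ?_
  have hA' : ∀ᶠ y in l, A y ≤ ε := by
    filter_upwards [Metric.tendsto_nhds.1 hA ε hε] with y hy
    rw [Real.dist_eq, sub_zero] at hy
    exact (le_abs_self _).trans hy.le
  filter_upwards [h, hA'] with y h1 h2
  linarith

private lemma aux_tendsto_of_limsup {F : α → ℝ} {b : ℝ}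
    (h0 : ∀ y, 0 ≤ F y) (hb : ∀ᶠ y in l, F y ≤ b) (h : limsup F l ≤ 0) :
    Tendsto F l (𝓝 0) := by
  refine aux_tendsto_zero h0 fun ε hε => ?_
  exact (eventually_lt_of_limsup_lt (lt_of_le_of_lt h hε) ⟨b, hb⟩).mono fun y hy => hy.le

private lemma aux_limsup_nonneg [l.NeBot] {F : α → ℝ} {b : ℝ}
    (h0 : ∀ y, 0 ≤ F y) (hb : ∀ᶠ y in l, F y ≤ b) : 0 ≤ limsup F l :=
  le_limsup_of_frequently_le (Eventually.frequently (Eventually.of_forall h0)) ⟨b, hb⟩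

private lemma aux_div_le {a d C : ℝ} (hC : 0 ≤ C) (hd : 0 ≤ d) (h : a ≤ C * d) : a / d ≤ C := by
  rcases hd.eq_or_lt with h0 | h0
  · simp [← h0, hC]
  · rw [div_le_iff₀ h0]; linarith [h, mul_comm C d]

private lemma aux_div_mono {a b d : ℝ} (h : a ≤ b) (hd : 0 ≤ d) : a / d ≤ b / d := by
  rcases hd.eq_or_lt with h0 | h0
  · simp [← h0]
  · gcongr

private lemma aux_limsup_const_mul [l.NeBot] {F : α → ℝ} {a b : ℝ} (ha : 0 < a)
    (h0 : ∀ y, 0 ≤ F y) (hb : ∀ᶠ y in l, F y ≤ b) :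
    limsup (fun y => a * F y) l ≤ a * limsup F l := by
  refine le_of_forall_pos_le_add fun ε hε => ?_
  have hev : ∀ᶠ y in l, F y < limsup F l + ε / a :=
    eventually_lt_of_limsup_lt (lt_add_of_pos_right _ (div_pos hε ha)) ⟨b, hb⟩
  refine limsup_le_of_le (isCoboundedUnder_le_of_le l fun y => mul_nonneg ha.le (h0 y)) ?_
  filter_upwards [hev] with y hy
  have := mul_le_mul_of_nonneg_left hy.le ha.le
  calc a * F y ≤ a * (limsup F l + ε / a) := this
    _ = a * limsup F l + ε := by
        have h' : a * (ε / a) = ε := by field_simp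
        rw [mul_add, h']

end AuxLemmas

set_option maxHeartbeats 1000000 in
/-- **Proposition:** if `(U, φ)` is a weak Cheeger chart and `V` is a separable Banach
space, then every Lipschitz map `f : U → V*` admits a unique `w*`-differential with respect
to `(U, φ)` at `μ`-a.e. point of `U`. -/
theorem wstar_differentiability {X : Type*} [MetricSpace X] [CompleteSpace X] [TopologicalSpace.SeparableSpace X]
    [MeasurableSpace X] [BorelSpace X]
    (μ : Measure X) (hμ : ∀ s : Set X, Bornology.IsBounded s → μ s ≠ ∞)
    {n : ℕ} (U : Set X) (φ : X → Euc n) (hw : IsWeakCheegerChart μ U φ)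
    {V : Type*} [NormedAddCommGroup V] [NormedSpace ℝ V] [CompleteSpace V]
    [TopologicalSpace.SeparableSpace V]
    (f : X → StrongDual ℝ V) (K : ℝ≥0) (hf : LipschitzOnWith K f U) :
    ∀ᵐ x ∂μ.restrict U, ∃! D : Euc n →ₗ[ℝ] StrongDual ℝ V,
      ∀ v : V, Tendsto (fun y => |(f y - f x - D (φ y - φ x)) v| / dist y x)
        (𝓝[U \ {x}] x) (𝓝 0) := by
  classical
  obtain ⟨⟨hU, hUpos, Lφ, hφ⟩, hchart⟩ := hw
  set u : ℕ → V := TopologicalSpace.denseSeq V with hu_def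
  have hu : DenseRange u := TopologicalSpace.denseRange_denseSeq V
  -- scalar components are Lipschitz on U
  have hscal : ∀ i : ℕ, LipschitzOnWith (K * ‖u i‖₊) (fun y => f y (u i)) U := by
    intro i
    refine LipschitzOnWith.of_dist_le_mul fun y hy z hz => ?_
    have h1 : dist (f y) (f z) ≤ K * dist y z := hf.dist_le_mul y hy z hz
    have h2 : |f y (u i) - f z (u i)| ≤ ‖f y - f z‖ * ‖u i‖ := by
      calc |f y (u i) - f z (u i)| = ‖(f y - f z) (u i)‖ := by
            rw [Real.norm_eq_abs, ContinuousLinearMap.sub_apply]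
        _ ≤ ‖f y - f z‖ * ‖u i‖ := (f y - f z).le_opNorm (u i)
    rw [Real.dist_eq]
    calc |f y (u i) - f z (u i)| ≤ ‖f y - f z‖ * ‖u i‖ := h2
      _ ≤ (K * dist y z) * ‖u i‖ := by
          rw [← dist_eq_norm]
          exact mul_le_mul_of_nonneg_right h1 (norm_nonneg _)
      _ = ((K * ‖u i‖₊ : ℝ≥0) : ℝ) * dist y z := by push_cast; ring
  have hgex : ∀ i : ℕ, ∃ g : X → ℝ, LipschitzWith (K * ‖u i‖₊) g ∧
      EqOn (fun y => f y (u i)) g U := fun i => (hscal i).extend_real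
  choose g hgl hge using hgex
  have h0ae := hchart (fun _ => (0 : ℝ)) 0 (LipschitzWith.const 0)
  have hiae := fun i => hchart (g i) _ (hgl i)
  filter_upwards [ae_restrict_mem hU, h0ae, ae_all_iff.2 hiae] with x hxU h0x hix
  set l := 𝓝[U \ {x}] x with hl
  have hevU : ∀ᶠ y in l, y ∈ U :=
    eventually_mem_nhdsWithin.mono fun y (hy : y ∈ U \ {x}) => hy.1
  -- the only linear map with vanishing slope is 0
  have hZ : ∀ M : Euc n →ₗ[ℝ] ℝ,
      Tendsto (fun y => |M (φ y - φ x)| / dist y x) l (𝓝 0) → M = 0 := by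
    intro M hM
    obtain ⟨L0, hL0, hL0u⟩ := h0x
    have e1 : M = L0 := by
      refine hL0u M (hM.congr fun y => ?_)
      rw [show (0:ℝ) - 0 - M (φ y - φ x) = -(M (φ y - φ x)) by ring, abs_neg]
    have e2 : (0 : Euc n →ₗ[ℝ] ℝ) = L0 := by
      exact hL0u 0 ((tendsto_const_nhds (x := (0:ℝ))).congr fun y => by simp)
    rw [e1, ← e2]
  have hZc : ∀ M : Euc n →L[ℝ] ℝ,
      Tendsto (fun y => |M (φ y - φ x)| / dist y x) l (𝓝 0) → M = 0 := by
    intro M hM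
    have hM0 : M.toLinearMap = 0 := hZ M.toLinearMap hM
    ext e; exact DFunLike.congr_fun hM0 e
  by_cases hbot : l = ⊥
  · -- isolated point: everything is trivial, the space of directions is zero
    have heuc : ∀ e : Euc n, e = 0 := by
      intro e
      have h1 := hZc (InnerProductSpace.toDual ℝ (Euc n) e) (by rw [hbot]; exact tendsto_bot)
      have h2 : ‖e‖ = 0 := by simpa using congrArg norm h1
      simpa using h2
    refine ⟨0, fun v => ?_, fun D' _ => ?_⟩
    · rw [hbot]; exact tendsto_bot
    · refine LinearMap.ext fun e => ?_
      rw [heuc e]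
      simp
  · haveI hlne : l.NeBot := ⟨hbot⟩
    have hpt : ∀ (M : Euc n →L[ℝ] ℝ) (y : X),
        |M (φ y - φ x)| / dist y x ≤ ‖M‖ * Lφ := by
      intro M y
      refine aux_div_le (by positivity) dist_nonneg ?_
      calc |M (φ y - φ x)| ≤ ‖M‖ * ‖φ y - φ x‖ := M.le_opNorm _
        _ ≤ ‖M‖ * (Lφ * dist y x) := by
            refine mul_le_mul_of_nonneg_left ?_ (norm_nonneg _)
            rw [← dist_eq_norm]
            exact hφ.dist_le_mul y x
        _ = ‖M‖ * Lφ * dist y x := by ring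
    have hbdd : ∀ M : Euc n →L[ℝ] ℝ,
        IsBoundedUnder (· ≤ ·) l (fun y => |M (φ y - φ x)| / dist y x) :=
      fun M => isBoundedUnder_of ⟨‖M‖ * Lφ, hpt M⟩
    set q : (Euc n →L[ℝ] ℝ) → ℝ :=
      fun M => limsup (fun y => |M (φ y - φ x)| / dist y x) l with hq_def
    have hq0 : ∀ M, 0 ≤ q M := fun M =>
      aux_limsup_nonneg (fun y => by positivity) (Eventually.of_forall (hpt M))
    have hq_lip : ∀ M N, q M ≤ q N + ‖M - N‖ * Lφ := by
      intro M N
      refine le_of_forall_pos_le_add fun ε hε => ?_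
      have hev : ∀ᶠ y in l, |N (φ y - φ x)| / dist y x < q N + ε :=
        eventually_lt_of_limsup_lt (lt_add_of_pos_right _ hε) (hbdd N)
      refine limsup_le_of_le (isCoboundedUnder_le_of_le l fun y => by positivity) ?_
      filter_upwards [hev] with y hy
      have habs : |M (φ y - φ x)| ≤ |N (φ y - φ x)| + |(M - N) (φ y - φ x)| := by
        have hsplit : M (φ y - φ x) = N (φ y - φ x) + (M - N) (φ y - φ x) := by
          simp
        rw [hsplit]; exact abs_add_le _ _
      calc |M (φ y - φ x)| / dist y x
          ≤ (|N (φ y - φ x)| + |(M - N) (φ y - φ x)|) / dist y x :=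
            aux_div_mono habs dist_nonneg
        _ = |N (φ y - φ x)| / dist y x + |(M - N) (φ y - φ x)| / dist y x := add_div _ _ _
        _ ≤ (q N + ε) + ‖M - N‖ * Lφ := add_le_add hy.le (hpt (M - N) y)
        _ = q N + ‖M - N‖ * Lφ + ε := by ring
    have hqcont : Continuous q := by
      refine (LipschitzWith.of_dist_le_mul (K := Lφ) fun M N => ?_).continuous
      rw [Real.dist_eq, abs_sub_le_iff, dist_eq_norm]
      have h1 := hq_lip M N
      have h2 := hq_lip N M
      rw [norm_sub_rev] at h2
      have h3 : ‖M - N‖ * (Lφ : ℝ) = (Lφ : ℝ) * ‖M - N‖ := mul_comm _ _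
      constructor <;> linarith
    have hvanish : ∀ M : Euc n →L[ℝ] ℝ, q M = 0 →
        Tendsto (fun y => |M (φ y - φ x)| / dist y x) l (𝓝 0) := fun M h =>
      aux_tendsto_of_limsup (fun y => by positivity) (Eventually.of_forall (hpt M)) h.le
    -- the quantitative lower bound
    obtain ⟨c, hc, hcq⟩ : ∃ c : ℝ, 0 < c ∧ ∀ M, c * ‖M‖ ≤ q M := by
      by_cases he : ∀ e : Euc n, e = 0
      · refine ⟨1, one_pos, fun M => ?_⟩
        have hM : M = 0 := by ext e; rw [he e]; simp
        rw [hM]; simpa using hq0 0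
      · push_neg at he
        obtain ⟨e₀, he₀⟩ := he
        haveI : Nontrivial (Euc n) := nontrivial_of_ne e₀ 0 he₀
        have hsne : (sphere (0 : Euc n) 1).Nonempty := NormedSpace.sphere_nonempty.2 zero_le_one
        set T := fun w : Euc n => (InnerProductSpace.toDual ℝ (Euc n) w : Euc n →L[ℝ] ℝ) with hT
        have hTcont : Continuous fun w => q (T w) :=
          hqcont.comp (InnerProductSpace.toDual ℝ (Euc n)).continuous
        obtain ⟨w₀, hw₀, hmin⟩ :=
          (isCompact_sphere (0 : Euc n) 1).exists_isMinOn hsne hTcont.continuousOn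
        have hw₀n : ‖w₀‖ = 1 := by simpa using hw₀
        have hc0 : 0 < q (T w₀) := by
          rcases (hq0 (T w₀)).eq_or_lt with h | h
          · exfalso
            have h1 := hZc (T w₀) (hvanish _ h.symm)
            have h2 : ‖w₀‖ = 0 := by
              have h2' := congrArg norm h1
              simp only [hT] at h2'
              rwa [(InnerProductSpace.toDual ℝ (Euc n)).norm_map w₀, norm_zero] at h2'
            rw [hw₀n] at h2; norm_num at h2
          · exact h
        refine ⟨q (T w₀), hc0, fun M => ?_⟩
        rcases eq_or_ne M 0 with rfl | hM0
        · simpa using hq0 0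
        · obtain ⟨w, rfl⟩ := (InnerProductSpace.toDual ℝ (Euc n)).surjective M
          have hw0 : w ≠ 0 := by
            rintro rfl
            simp [hT] at hM0
          have hwn : (0 : ℝ) < ‖w‖ := norm_pos_iff.2 hw0
          have hmem : ‖w‖⁻¹ • w ∈ sphere (0 : Euc n) 1 := by
            simp [norm_smul, abs_of_pos (inv_pos.2 hwn), inv_mul_cancel₀ hwn.ne']
          have h1 : q (T w₀) ≤ q (T (‖w‖⁻¹ • w)) := hmin hmem
          have hTsmul : T (‖w‖⁻¹ • w) = ‖w‖⁻¹ • T w := by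
            simp [hT]
          have h2 : q (T (‖w‖⁻¹ • w)) ≤ ‖w‖⁻¹ * q (T w) := by
            rw [hTsmul]; simp only [hq_def]
            have hfun : (fun y => |(‖w‖⁻¹ • T w) (φ y - φ x)| / dist y x)
                = fun y => ‖w‖⁻¹ * (|T w (φ y - φ x)| / dist y x) := by
              funext y
              rw [ContinuousLinearMap.smul_apply, smul_eq_mul, abs_mul,
                abs_of_pos (inv_pos.2 hwn), mul_div_assoc]
            rw [hfun]
            exact aux_limsup_const_mul (inv_pos.2 hwn) (fun y => by positivity)
              (Eventually.of_forall (hpt (T w)))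
          have h3 : q (T w₀) * ‖w‖ ≤ q (T w) := by
            calc q (T w₀) * ‖w‖ ≤ ‖w‖⁻¹ * q (T w) * ‖w‖ :=
                mul_le_mul_of_nonneg_right (h1.trans h2) hwn.le
              _ = q (T w) := by field_simp
          have hnorm : ‖T w‖ = ‖w‖ := by simp [hT]
          rw [hnorm]
          exact h3
    -- differentials for the dense sequence
    have hmain : ∀ i : ℕ, ∃ M : Euc n →L[ℝ] ℝ,
        Tendsto (fun y => |f y (u i) - f x (u i) - M (φ y - φ x)| / dist y x) l (𝓝 0) := by
      intro i
      obtain ⟨L, hL, -⟩ := hix i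
      refine ⟨LinearMap.toContinuousLinearMap L, hL.congr' ?_⟩
      filter_upwards [hevU] with y hyU
      rw [← hge i hyU, ← hge i hxU]
      rfl
    choose Li hLi using hmain
    set P : V → (Euc n →L[ℝ] ℝ) → Prop := fun v M =>
      Tendsto (fun y => |f y v - f x v - M (φ y - φ x)| / dist y x) l (𝓝 0) with hP_def
    have hfK : ∀ v : V, ∀ y ∈ U, |f y v - f x v| ≤ K * ‖v‖ * dist y x := by
      intro v y hyU
      have h1 : ‖f y - f x‖ ≤ K * dist y x := by
        rw [← dist_eq_norm]; exact hf.dist_le_mul y hyU x hxU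
      calc |f y v - f x v| = ‖(f y - f x) v‖ := by
            rw [Real.norm_eq_abs, ContinuousLinearMap.sub_apply]
        _ ≤ ‖f y - f x‖ * ‖v‖ := (f y - f x).le_opNorm v
        _ ≤ (K * dist y x) * ‖v‖ := mul_le_mul_of_nonneg_right h1 (norm_nonneg _)
        _ = K * ‖v‖ * dist y x := by ring
    have hdiff : ∀ (v w : V) (M N : Euc n →L[ℝ] ℝ), P v M → P w N →
        q (M - N) ≤ K * ‖v - w‖ := by
      intro v w M N hv hw
      simp only [hq_def]
      refine aux_limsup_le (fun y => by positivity)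
        (by have h := hv.add hw; rwa [add_zero] at h) ?_
      filter_upwards [hevU] with y hyU
      have key : |(M - N) (φ y - φ x)| ≤
          |f y v - f x v - M (φ y - φ x)| + |f y w - f x w - N (φ y - φ x)|
            + |f y (v - w) - f x (v - w)| := by
        have hexp : (M - N) (φ y - φ x) =
            -(f y v - f x v - M (φ y - φ x)) + (f y w - f x w - N (φ y - φ x))
              + (f y (v - w) - f x (v - w)) := by
          simp only [ContinuousLinearMap.sub_apply, map_sub]
          ring
        rw [hexp]
        calc |(-(f y v - f x v - M (φ y - φ x)) + (f y w - f x w - N (φ y - φ x))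
              + (f y (v - w) - f x (v - w)))|
            ≤ |-(f y v - f x v - M (φ y - φ x))| + |f y w - f x w - N (φ y - φ x)|
              + |f y (v - w) - f x (v - w)| := abs_add_three _ _ _
          _ = _ := by rw [abs_neg]
      calc |(M - N) (φ y - φ x)| / dist y x
          ≤ (|f y v - f x v - M (φ y - φ x)| + |f y w - f x w - N (φ y - φ x)|
              + |f y (v - w) - f x (v - w)|) / dist y x := aux_div_mono key dist_nonneg
        _ = |f y v - f x v - M (φ y - φ x)| / dist y x
              + |f y w - f x w - N (φ y - φ x)| / dist y x
              + |f y (v - w) - f x (v - w)| / dist y x := by rw [add_div, add_div]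
        _ ≤ (|f y v - f x v - M (φ y - φ x)| / dist y x
              + |f y w - f x w - N (φ y - φ x)| / dist y x) + K * ‖v - w‖ := by
            refine add_le_add (le_refl _) ?_
            exact aux_div_le (by positivity) dist_nonneg (hfK (v - w) y hyU)
    have hP0 : P 0 0 := by
      simp only [hP_def]
      have hfun : (fun y => |f y (0 : V) - f x 0 - (0 : Euc n →L[ℝ] ℝ) (φ y - φ x)| / dist y x)
          = fun _ => (0 : ℝ) := by
        funext y; simp
      rw [hfun]
      exact tendsto_const_nhds
    have hqK : ∀ (v : V) (M : Euc n →L[ℝ] ℝ), P v M → q M ≤ K * ‖v‖ := by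
      intro v M h
      have := hdiff v 0 M 0 h hP0
      simpa using this
    have huniq : ∀ (v : V) (M N : Euc n →L[ℝ] ℝ), P v M → P v N → M = N := by
      intro v M N hM hN
      have h1 := hdiff v v M N hM hN
      simp only [sub_self, norm_zero, mul_zero] at h1
      have h2 : q (M - N) = 0 := le_antisymm h1 (hq0 _)
      have h3 := hZc (M - N) (hvanish _ h2)
      exact sub_eq_zero.1 h3
    -- existence of the differential for every direction
    have hex : ∀ v : V, ∃ M, P v M := by
      intro v
      have hsel : ∀ k : ℕ, ∃ i, dist v (u i) < 1 / (k + 1) :=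
        fun k => hu.exists_dist_lt v (by positivity)
      choose ι hι using hsel
      have hdistu : ∀ k : ℕ, ‖v - u (ι k)‖ < 1 / (k + 1) := by
        intro k
        rw [← dist_eq_norm]
        exact hι k
      have hcs : CauchySeq fun k => Li (ι k) := by
        refine cauchySeq_of_le_tendsto_0 (fun N : ℕ => c⁻¹ * (K * (2 / (N + 1))))
          (fun k m N hk hm => ?_) ?_
        · have h1 : q (Li (ι k) - Li (ι m)) ≤ K * ‖u (ι k) - u (ι m)‖ :=
            hdiff _ _ _ _ (hLi (ι k)) (hLi (ι m))
          have h2 : ‖u (ι k) - u (ι m)‖ ≤ 2 / (N + 1) := by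
            have e1 : ‖u (ι k) - u (ι m)‖ ≤ ‖v - u (ι k)‖ + ‖v - u (ι m)‖ := by
              have : u (ι k) - u (ι m) = -(v - u (ι k)) + (v - u (ι m)) := by abel
              rw [this]
              exact (norm_add_le _ _).trans_eq (by rw [norm_neg])
            have e2 : (1 : ℝ) / (k + 1) ≤ 1 / (N + 1) := by
              apply one_div_le_one_div_of_le (by positivity)
              have : (N : ℝ) ≤ k := Nat.cast_le.2 hk
              linarith
            have e3 : (1 : ℝ) / (m + 1) ≤ 1 / (N + 1) := by
              apply one_div_le_one_div_of_le (by positivity)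
              have : (N : ℝ) ≤ m := Nat.cast_le.2 hm
              linarith
            have := (hdistu k).le
            have := (hdistu m).le
            have h4 : (2 : ℝ) / (N + 1) = 1 / (N + 1) + 1 / (N + 1) := by ring
            rw [h4]
            linarith [(hdistu k).le, (hdistu m).le]
          rw [dist_eq_norm, le_inv_mul_iff₀ hc]
          calc c * ‖Li (ι k) - Li (ι m)‖ ≤ q (Li (ι k) - Li (ι m)) := hcq _
            _ ≤ K * ‖u (ι k) - u (ι m)‖ := h1
            _ ≤ K * (2 / (N + 1)) := mul_le_mul_of_nonneg_left h2 K.2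
        · have h5 : Tendsto (fun N : ℕ => (1 : ℝ) / (N + 1)) atTop (𝓝 0) :=
            tendsto_one_div_add_atTop_nhds_zero_nat
          have h6 : Tendsto (fun N : ℕ => c⁻¹ * (K * (2 * (1 / (N + 1))))) atTop (𝓝 0) := by
            have := (h5.const_mul (c⁻¹ * (K * 2)))
            simp only [mul_zero] at this
            refine this.congr fun N => by ring
          refine h6.congr fun N => by ring
      obtain ⟨M, hM⟩ := cauchySeq_tendsto_of_complete hcs
      refine ⟨M, ?_⟩
      simp only [hP_def]
      refine aux_tendsto_zero (fun y => by positivity) fun ε hε => ?_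
      have hk1 : Tendsto (fun k : ℕ => (K : ℝ) * (1 / (k + 1))) atTop (𝓝 0) := by
        have := tendsto_one_div_add_atTop_nhds_zero_nat.const_mul (K : ℝ)
        simpa using this
      have hk2 : Tendsto (fun k => ‖M - Li (ι k)‖ * Lφ) atTop (𝓝 0) := by
        have h7 : Tendsto (fun k => M - Li (ι k)) atTop (𝓝 0) := by
          simpa using (tendsto_const_nhds (x := M)).sub hM
        have := (h7.norm).mul_const (Lφ : ℝ)
        simpa using this
      obtain ⟨k, hka, hkb⟩ : ∃ k : ℕ,
          (K : ℝ) * (1 / ((k : ℝ) + 1)) < ε / 3 ∧ ‖M - Li (ι k)‖ * (Lφ : ℝ) < ε / 3 :=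
        ((hk1.eventually_lt_const (by positivity)).and
          (hk2.eventually_lt_const (by positivity))).exists
      have hev3 : ∀ᶠ y in l,
          |f y (u (ι k)) - f x (u (ι k)) - Li (ι k) (φ y - φ x)| / dist y x < ε / 3 :=
        (hLi (ι k)).eventually_lt_const (by positivity)
      filter_upwards [hevU, hev3] with y hyU hy3
      have key : |f y v - f x v - M (φ y - φ x)| ≤
          |f y (u (ι k)) - f x (u (ι k)) - Li (ι k) (φ y - φ x)|
            + |f y (v - u (ι k)) - f x (v - u (ι k))|
            + |(M - Li (ι k)) (φ y - φ x)| := by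
        have hexp : f y v - f x v - M (φ y - φ x) =
            (f y (u (ι k)) - f x (u (ι k)) - Li (ι k) (φ y - φ x))
              + (f y (v - u (ι k)) - f x (v - u (ι k)))
              + (M - Li (ι k)) (φ y - φ x) * (-1) := by
          simp only [ContinuousLinearMap.sub_apply, map_sub]
          ring
        rw [hexp]
        calc _ ≤ |f y (u (ι k)) - f x (u (ι k)) - Li (ι k) (φ y - φ x)|
              + |f y (v - u (ι k)) - f x (v - u (ι k))|
              + |(M - Li (ι k)) (φ y - φ x) * (-1)| := abs_add_three _ _ _
          _ = _ := by rw [abs_mul, abs_neg, abs_one, mul_one]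
      have hb2 : |f y (v - u (ι k)) - f x (v - u (ι k))| / dist y x
          ≤ (K : ℝ) * (1 / ((k : ℝ) + 1)) := by
        refine aux_div_le (by positivity) dist_nonneg ?_
        refine (hfK (v - u (ι k)) y hyU).trans ?_
        exact mul_le_mul_of_nonneg_right
          (mul_le_mul_of_nonneg_left (hdistu k).le (NNReal.coe_nonneg K)) dist_nonneg
      calc |f y v - f x v - M (φ y - φ x)| / dist y x
          ≤ (|f y (u (ι k)) - f x (u (ι k)) - Li (ι k) (φ y - φ x)|
              + |f y (v - u (ι k)) - f x (v - u (ι k))|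
              + |(M - Li (ι k)) (φ y - φ x)|) / dist y x := aux_div_mono key dist_nonneg
        _ = |f y (u (ι k)) - f x (u (ι k)) - Li (ι k) (φ y - φ x)| / dist y x
              + |f y (v - u (ι k)) - f x (v - u (ι k))| / dist y x
              + |(M - Li (ι k)) (φ y - φ x)| / dist y x := by rw [add_div, add_div]
        _ ≤ ε / 3 + (K : ℝ) * (1 / ((k : ℝ) + 1)) + ‖M - Li (ι k)‖ * (Lφ : ℝ) :=
            add_le_add (add_le_add hy3.le hb2) (hpt (M - Li (ι k)) y)
        _ ≤ ε := by linarith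
    choose Λ hΛ using hex
    have hadd : ∀ v w : V, Λ (v + w) = Λ v + Λ w := by
      intro v w
      refine huniq (v + w) _ _ (hΛ (v + w)) ?_
      simp only [hP_def]
      refine squeeze_zero (fun y => by positivity) (fun y => ?_)
        (by have h := (hΛ v).add (hΛ w); rwa [add_zero] at h)
      have hexp : |f y (v + w) - f x (v + w) - (Λ v + Λ w) (φ y - φ x)| ≤
          |f y v - f x v - Λ v (φ y - φ x)| + |f y w - f x w - Λ w (φ y - φ x)| := by
        have h8 : f y (v + w) - f x (v + w) - (Λ v + Λ w) (φ y - φ x) =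
            (f y v - f x v - Λ v (φ y - φ x)) + (f y w - f x w - Λ w (φ y - φ x)) := by
          simp only [map_add, ContinuousLinearMap.add_apply]
          ring
        rw [h8]
        exact abs_add_le _ _
      calc |f y (v + w) - f x (v + w) - (Λ v + Λ w) (φ y - φ x)| / dist y x
          ≤ (|f y v - f x v - Λ v (φ y - φ x)| + |f y w - f x w - Λ w (φ y - φ x)|) / dist y x :=
            aux_div_mono hexp dist_nonneg
        _ = |f y v - f x v - Λ v (φ y - φ x)| / dist y x
              + |f y w - f x w - Λ w (φ y - φ x)| / dist y x := add_div _ _ _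
    have hsmul : ∀ (a : ℝ) (v : V), Λ (a • v) = a • Λ v := by
      intro a v
      refine huniq (a • v) _ _ (hΛ (a • v)) ?_
      simp only [hP_def]
      have h9 : ∀ y, |f y (a • v) - f x (a • v) - (a • Λ v) (φ y - φ x)| / dist y x
          = |a| * (|f y v - f x v - Λ v (φ y - φ x)| / dist y x) := by
        intro y
        have h9' : f y (a • v) - f x (a • v) - (a • Λ v) (φ y - φ x)
            = a * (f y v - f x v - Λ v (φ y - φ x)) := by
          simp only [_root_.map_smul, ContinuousLinearMap.smul_apply, smul_eq_mul]
          ring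
        rw [h9', abs_mul, mul_div_assoc]
      have h10 := (hΛ v).const_mul |a|
      rw [mul_zero] at h10
      exact Tendsto.congr (fun y => (h9 y).symm) h10
    have hnormΛ : ∀ v : V, ‖Λ v‖ ≤ c⁻¹ * (K * ‖v‖) := by
      intro v
      rw [le_inv_mul_iff₀ hc]
      exact (hcq (Λ v)).trans (hqK v (Λ v) (hΛ v))
    have hb : ∀ (e : Euc n) (v : V), ‖Λ v e‖ ≤ c⁻¹ * ↑K * ‖e‖ * ‖v‖ := by
      intro e v
      rw [Real.norm_eq_abs]
      calc |Λ v e| ≤ ‖Λ v‖ * ‖e‖ := (Λ v).le_opNorm e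
        _ ≤ (c⁻¹ * (K * ‖v‖)) * ‖e‖ := mul_le_mul_of_nonneg_right (hnormΛ v) (norm_nonneg e)
        _ = c⁻¹ * ↑K * ‖e‖ * ‖v‖ := by ring
    set D : Euc n →ₗ[ℝ] StrongDual ℝ V :=
      { toFun := fun e => LinearMap.mkContinuous
          { toFun := fun v => Λ v e
            map_add' := fun v w => by
              simp only [hadd, ContinuousLinearMap.add_apply]
            map_smul' := fun a v => by
              simp only [hsmul, ContinuousLinearMap.coe_smul', Pi.smul_apply,
                RingHom.id_apply, smul_eq_mul] }
          (c⁻¹ * ↑K * ‖e‖) (fun v => hb e v)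
        map_add' := fun e e' => by
          ext v
          exact map_add (Λ v) e e'
        map_smul' := fun a e => by
          ext v
          exact map_smul (Λ v) a e } with hD_def
    have hDapp : ∀ (e : Euc n) (v : V), D e v = Λ v e := fun e v => rfl
    refine ⟨D, fun v => ?_, fun D' hD' => ?_⟩
    · have hPv := hΛ v
      simp only [hP_def] at hPv
      refine hPv.congr fun y => ?_
      simp only [ContinuousLinearMap.sub_apply, hDapp]
    · refine LinearMap.ext fun e => ContinuousLinearMap.ext fun v => ?_
      set N : Euc n →ₗ[ℝ] ℝ :=
        { toFun := fun e => D' e v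
          map_add' := fun a b => by
            simp only [map_add, ContinuousLinearMap.add_apply]
          map_smul' := fun r a => by
            simp only [_root_.map_smul, ContinuousLinearMap.coe_smul', Pi.smul_apply,
              RingHom.id_apply, smul_eq_mul] } with hN_def
      have hPN : P v (LinearMap.toContinuousLinearMap N) := by
        simp only [hP_def]
        refine (hD' v).congr fun y => ?_
        simp only [ContinuousLinearMap.sub_apply, LinearMap.coe_toContinuousLinearMap']
        rfl
      have h10 := huniq v _ _ hPN (hΛ v)
      have h11 := DFunLike.congr_fun h10 e
      rw [hDapp]
      exact h11.symm ▸ rfl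


end
end

section
/- Let (X,d,μ) be a metric measure space, (U,φ) an n-dimensional chart on X, Y a metric space, and f : U → Y an L-bi-Lipschitz map admitting a metric differential with respect to (U,φ). Then there is a countable decomposition U = Z ∪ ⋃_i V_i into pairwise disjoint sets, where μ(Z) = 0 and each V_i is Borel with φ|_{V_i} bi-Lipschitz. -/
open MeasureTheory Filter Set Metric
open scoped ENNReal NNReal Topology RealInnerProductSpace

noncomputable section

lemma abs_apply_le_norm {n : ℕ} (v : Euc n) (i : Fin n) : |v i| ≤ ‖v‖ := by
  have h1 : |v i| = Real.sqrt (‖v i‖ ^ 2) := by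
    rw [Real.norm_eq_abs, sq_abs, Real.sqrt_sq_eq_abs]
  rw [EuclideanSpace.norm_eq, h1]
  apply Real.sqrt_le_sqrt
  exact Finset.single_le_sum (f := fun j => ‖v j‖ ^ 2) (fun j _ => sq_nonneg _) (Finset.mem_univ i)

lemma seminorm_sum_le {ι E : Type*} [AddCommGroup E] [Module ℝ E] (s : Seminorm ℝ E)
    (t : Finset ι) (g : ι → E) : s (∑ i ∈ t, g i) ≤ ∑ i ∈ t, s (g i) := by
  classical
  induction t using Finset.induction with
  | empty => simp
  | insert _ _ h ih =>
    rw [Finset.sum_insert h, Finset.sum_insert h]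
    exact (map_add_le_add s _ _).trans (by linarith)

lemma seminorm_le_sum_mul_norm {n : ℕ} (s : Seminorm ℝ (Euc n)) (v : Euc n) :
    s v ≤ (∑ i : Fin n, s (EuclideanSpace.single i 1)) * ‖v‖ := by
  classical
  have hrepr : v = ∑ i : Fin n, v i • EuclideanSpace.single i (1:ℝ) := by
    have := (EuclideanSpace.basisFun (Fin n) ℝ).toBasis.sum_repr v
    simpa [EuclideanSpace.basisFun_apply] using this.symm
  calc s v = s (∑ i : Fin n, v i • EuclideanSpace.single i (1:ℝ)) := by rw [← hrepr]
    _ ≤ ∑ i : Fin n, s (v i • EuclideanSpace.single i (1:ℝ)) := seminorm_sum_le s _ _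
    _ ≤ ∑ i : Fin n, s (EuclideanSpace.single i (1:ℝ)) * ‖v‖ := by
        apply Finset.sum_le_sum
        intro i _
        rw [map_smul_eq_mul]
        calc |v i| * s (EuclideanSpace.single i (1:ℝ)) ≤ ‖v‖ * s (EuclideanSpace.single i (1:ℝ)) :=
          mul_le_mul_of_nonneg_right (abs_apply_le_norm v i) (apply_nonneg s _)
        _ = _ := mul_comm _ _
    _ = _ := (Finset.sum_mul _ _ _).symm

lemma exists_measurable_md {X : Type*} [MetricSpace X] [MeasurableSpace X] [BorelSpace X]
    {n : ℕ} (U : Set X) (md : X → Euc n → ℝ)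
    (hmeas : ∀ v, Measurable fun x => md x v)
    (hsemi : ∀ x ∈ U, IsSeminormFn (md x))
    (w : X → Euc n) (hw : Measurable w) :
    ∃ Q : X → ℝ, Measurable Q ∧ ∀ x ∈ U, Q x = md x (w x) := by
  classical
  set C : X → ℝ := fun x => ∑ i : Fin n, md x (EuclideanSpace.single i 1) with hC
  have hCmeas : Measurable C := Finset.measurable_sum _ fun i _ => hmeas _
  have hne : Nonempty (Euc n) := ⟨0⟩
  set q : ℕ → Euc n := TopologicalSpace.denseSeq (Euc n) with hq
  have hqd : DenseRange q := TopologicalSpace.denseRange_denseSeq _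
  set F : ℕ → X → ℝ := fun j x => md x (q j) + C x * ‖w x - q j‖ with hF
  refine ⟨fun x => ⨅ j, F j x,
    Measurable.iInf (fun j => ((hmeas _).add (hCmeas.mul ((hw.sub measurable_const).norm)))), ?_⟩
  intro x hx
  obtain ⟨s, hs⟩ := hsemi x hx
  have hCx : C x = ∑ i : Fin n, s (EuclideanSpace.single i 1) := by
    rw [hC]; exact Finset.sum_congr rfl fun i _ => hs _
  have hCx0 : 0 ≤ C x := by
    rw [hCx]; exact Finset.sum_nonneg fun i _ => apply_nonneg s _
  have hsle : ∀ v, s v ≤ C x * ‖v‖ := fun v => by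
    rw [hCx]; exact seminorm_le_sum_mul_norm s v
  have hlb : ∀ j, md x (w x) ≤ F j x := by
    intro j
    rw [hF]; dsimp only
    rw [hs, hs]
    have h1 : s (w x) ≤ s (q j) + s (w x - q j) := by
      have := map_add_le_add s (q j) (w x - q j); simpa using this
    have h2 : s (w x - q j) ≤ C x * ‖w x - q j‖ := hsle _
    linarith
  apply le_antisymm
  · apply le_of_forall_pos_le_add
    intro ε hε
    obtain ⟨j, hj⟩ : ∃ j, ‖w x - q j‖ < ε / (2 * C x + 1) := by
      have hden : (0:ℝ) < ε / (2 * C x + 1) := div_pos hε (by linarith)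
      obtain ⟨j, hj⟩ := hqd.exists_dist_lt (w x) hden
      exact ⟨j, by rwa [dist_eq_norm] at hj⟩
    have hnn : 0 ≤ ‖w x - q j‖ := norm_nonneg _
    have hstep : F j x ≤ md x (w x) + ε := by
      rw [hF]; dsimp only; rw [hs, hs]
      have h1 : s (q j) ≤ s (w x) + s (q j - w x) := by
        have := map_add_le_add s (w x) (q j - w x); simpa using this
      have h2 : s (q j - w x) = s (w x - q j) := by
        rw [← neg_sub (w x) (q j), map_neg_eq_map]
      have h3 : s (w x - q j) ≤ C x * ‖w x - q j‖ := hsle _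
      have h4 : C x * ‖w x - q j‖ ≤ C x * (ε / (2 * C x + 1)) :=
        mul_le_mul_of_nonneg_left hj.le hCx0
      have h5 : 2 * (C x * (ε / (2 * C x + 1))) ≤ ε := by
        rw [mul_div_assoc'] at *
        rw [show 2 * (C x * ε / (2 * C x + 1)) = (2 * C x) * ε / (2 * C x + 1) by ring]
        rw [div_le_iff₀ (by linarith)]
        nlinarith
      linarith
    exact (ciInf_le ⟨md x (w x), by rintro y ⟨j', rfl⟩; exact hlb j'⟩ j).trans hstep
  · exact le_ciInf hlb

/-- **Lemma (bi-Lipschitz decomposition):** if `f : U → Y` is an `L`-bi-Lipschitz map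
admitting a metric differential with respect to the chart `(U, φ)`, then `U = Z ∪ ⋃ i, V i`
with `μ Z = 0`, the pieces pairwise disjoint, each `V i` Borel and `φ|_{V i}` bi-Lipschitz. -/
theorem biLipschitz_decomposition {X : Type*} [MetricSpace X] [CompleteSpace X] [TopologicalSpace.SeparableSpace X]
    [MeasurableSpace X] [BorelSpace X]
    (μ : Measure X) (hμ : ∀ s : Set X, Bornology.IsBounded s → μ s ≠ ∞)
    {n : ℕ} (U : Set X) (φ : X → Euc n) (hchart : IsChart μ U φ)
    {Y : Type*} [MetricSpace Y] (f : X → Y) (L : ℝ) (hL : 0 < L)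
    (hbil : BiLipschitzOn L f U) (hdiff : HasMetricDiff μ U φ U f) :
    ∃ (Z : Set X) (V : ℕ → Set X), U = Z ∪ ⋃ i, V i ∧ μ Z = 0 ∧
      Pairwise (Function.onFun Disjoint V) ∧ (∀ i, Disjoint Z (V i)) ∧
      (∀ i, MeasurableSet (V i)) ∧
      ∀ i, ∃ L' : ℝ, 0 < L' ∧ BiLipschitzOn L' φ (V i) := by
  classical
  obtain ⟨hU, hUpos, K, hK⟩ := hchart
  obtain ⟨md, hsemi0, hmdMeas, hae0⟩ := hdiff
  simp only [Set.inter_self] at hsemi0 hae0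
  set c : ℝ := 1 / (2 * L) with hc
  have hc0 : 0 < c := by positivity
  have h2Lc : 2 * L * c = 1 := by rw [hc]; field_simp
  have hLinv : L⁻¹ = 2 * c := by rw [hc]; field_simp
  have hUne : U.Nonempty := nonempty_of_measure_ne_zero hUpos.ne'
  have hXne : Nonempty X := ⟨hUne.choose⟩
  -- the good set G
  have hT0 : μ.restrict U {x | ¬ Tendsto
      (fun y => |dist (f y) (f x) - md x (φ y - φ x)| / dist y x) (𝓝[U \ {x}] x) (𝓝 0)} = 0 :=
    ae_iff.mp hae0
  obtain ⟨T, hTsub, hTmeas, hT0'⟩ := exists_measurable_superset_of_null hT0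
  set G : Set X := Tᶜ with hG
  have hGmeas : MeasurableSet G := hTmeas.compl
  have hUG : μ (U \ G) = 0 := by
    have h1 : U \ G = T ∩ U := by rw [hG, Set.diff_eq, compl_compl, Set.inter_comm]
    rw [h1, ← Measure.restrict_apply hTmeas]; exact hT0'
  have hGtend : ∀ x ∈ G, Tendsto
      (fun y => |dist (f y) (f x) - md x (φ y - φ x)| / dist y x) (𝓝[U \ {x}] x) (𝓝 0) := by
    intro x hx
    by_contra hcon
    exact hx (hTsub hcon)
  -- C function
  set Cf : X → ℝ := fun x => ∑ i : Fin n, md x (EuclideanSpace.single i 1) with hCf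
  have hCfmeas : Measurable Cf := Finset.measurable_sum _ fun i _ => hmdMeas _
  have hCf_eq : ∀ x ∈ U, ∀ s : Seminorm ℝ (Euc n), (∀ v, md x v = s v) →
      Cf x = ∑ i : Fin n, s (EuclideanSpace.single i 1) := by
    intro x _ s hs; exact Finset.sum_congr rfl fun i _ => hs _
  -- countability setup
  haveI : SecondCountableTopology X := UniformSpace.secondCountable_of_separable X
  obtain ⟨D, hDc, hDd⟩ := TopologicalSpace.exists_countable_dense (↥U)
  choose Q hQmeas hQeq using fun d : ↥U =>
    exists_measurable_md U md hmdMeas hsemi0 (fun x => φ ↑d - φ x)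
      (measurable_const.sub (hK.continuous.measurable))
  set r : ℕ → ℝ := fun m => 1 / ((m:ℝ) + 1) with hr
  have hr0 : ∀ m, 0 < r m := fun m => by rw [hr]; positivity
  set P : ℕ → X → Prop := fun m x =>
    ∀ y ∈ U, dist y x < r m → |dist (f y) (f x) - md x (φ y - φ x)| ≤ c * dist y x with hP
  set A : ℕ → ℕ → Set X := fun k m => {x | x ∈ U ∧ Cf x ≤ (k:ℝ) ∧ P m x} with hA
  have hfLip : ∀ x ∈ U, ∀ y ∈ U, dist (f x) (f y) ≤ L * dist x y :=
    fun x hx y hy => (hbil x hx y hy).2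
  -- the bridge: the condition on the countable dense set implies the full condition
  have bridge : ∀ (m : ℕ) (x : X), x ∈ U →
      (∀ d ∈ D, dist (↑d : X) x < r m →
        |dist (f ↑d) (f x) - md x (φ ↑d - φ x)| ≤ c * dist (↑d : X) x) →
      P m x := by
    intro m x hxU hD
    intro y hyU hyd
    by_contra hbad
    push_neg at hbad
    obtain ⟨s, hs⟩ := hsemi0 x hxU
    have hCx0 : 0 ≤ Cf x := by
      rw [hCf_eq x hxU s hs]; exact Finset.sum_nonneg fun i _ => apply_nonneg s _
    have hsle : ∀ v, s v ≤ Cf x * ‖v‖ := fun v => by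
      rw [hCf_eq x hxU s hs]; exact seminorm_le_sum_mul_norm s v
    set B : ℝ := Cf x * (K : ℝ) with hB
    have hB0 : 0 ≤ B := mul_nonneg hCx0 K.2
    set M : ℝ := L + B + c + 1 with hM
    have hM0 : 0 < M := by positivity
    set hy0 : ℝ := |dist (f y) (f x) - md x (φ y - φ x)| - c * dist y x with hhy
    have hhy0 : 0 < hy0 := by rw [hhy]; linarith
    set δ : ℝ := min (hy0 / M) (r m - dist y x) with hδ
    have hδ0 : 0 < δ := lt_min (by positivity) (by linarith)
    obtain ⟨d, hdD, hdy⟩ := hDd.exists_dist_lt (⟨y, hyU⟩ : ↥U) hδ0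
    have hdy' : dist (↑d : X) y < δ := by
      rw [Subtype.dist_eq] at hdy; rw [dist_comm]; exact hdy
    have hdU : (↑d : X) ∈ U := d.2
    have e1 : |dist (f ↑d) (f x) - dist (f y) (f x)| ≤ L * dist (↑d : X) y :=
      calc |dist (f ↑d) (f x) - dist (f y) (f x)| ≤ dist (f ↑d) (f y) := abs_dist_sub_le _ _ _
        _ ≤ L * dist (↑d : X) y := hfLip _ hdU _ hyU
    have e2 : |md x (φ ↑d - φ x) - md x (φ y - φ x)| ≤ B * dist (↑d : X) y := by
      rw [hs, hs]
      have hsym : s (φ y - φ ↑d) = s (φ ↑d - φ y) := by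
        rw [← neg_sub (φ ↑d) (φ y), map_neg_eq_map]
      have t1 : s (φ ↑d - φ x) - s (φ y - φ x) ≤ s (φ ↑d - φ y) := by
        have h0 := map_add_le_add s (φ y - φ x) (φ ↑d - φ y)
        have he : φ y - φ x + (φ ↑d - φ y) = φ ↑d - φ x := by abel
        rw [he] at h0; linarith
      have t2 : s (φ y - φ x) - s (φ ↑d - φ x) ≤ s (φ ↑d - φ y) := by
        have h0 := map_add_le_add s (φ ↑d - φ x) (φ y - φ ↑d)
        have he : φ ↑d - φ x + (φ y - φ ↑d) = φ y - φ x := by abel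
        rw [he, hsym] at h0; linarith
      have t3 : s (φ ↑d - φ y) ≤ Cf x * ‖φ ↑d - φ y‖ := hsle _
      have t4 : ‖φ ↑d - φ y‖ ≤ (K : ℝ) * dist (↑d : X) y := by
        rw [← dist_eq_norm]; exact hK.dist_le_mul _ _
      calc |s (φ ↑d - φ x) - s (φ y - φ x)| ≤ s (φ ↑d - φ y) := abs_sub_le_iff.mpr ⟨t1, t2⟩
        _ ≤ Cf x * ‖φ ↑d - φ y‖ := t3
        _ ≤ Cf x * ((K : ℝ) * dist (↑d : X) y) :=
            mul_le_mul_of_nonneg_left t4 hCx0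
        _ = B * dist (↑d : X) y := by rw [hB]; ring
    have e3 : |dist (↑d : X) x - dist y x| ≤ dist (↑d : X) y := abs_dist_sub_le _ _ _
    have hδr : δ ≤ r m - dist y x := min_le_right _ _
    have hdx : dist (↑d : X) x < r m := by
      have h3 := (abs_le.mp e3).2
      linarith
    have hcond := hD d hdD hdx
    -- derive a contradiction
    have hMdy : M * dist (↑d : X) y < hy0 := by
      have h1 : dist (↑d : X) y < hy0 / M := lt_of_lt_of_le hdy' (min_le_left _ _)
      calc M * dist (↑d : X) y = dist (↑d : X) y * M := by ring
        _ < hy0 := (lt_div_iff₀ hM0).mp h1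
    have hdy0 : 0 ≤ dist (↑d : X) y := dist_nonneg
    have hMexp : M * dist (↑d : X) y
        = L * dist (↑d : X) y + B * dist (↑d : X) y + c * dist (↑d : X) y + dist (↑d : X) y := by
      rw [hM]; ring
    have habs : |dist (f y) (f x) - md x (φ y - φ x)|
        - |dist (f ↑d) (f x) - md x (φ ↑d - φ x)|
        ≤ L * dist (↑d : X) y + B * dist (↑d : X) y := by
      have h0 := abs_sub_abs_le_abs_sub (dist (f y) (f x) - md x (φ y - φ x))
        (dist (f ↑d) (f x) - md x (φ ↑d - φ x))
      have h1 : |(dist (f y) (f x) - md x (φ y - φ x))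
          - (dist (f ↑d) (f x) - md x (φ ↑d - φ x))|
          ≤ |dist (f ↑d) (f x) - dist (f y) (f x)| + |md x (φ ↑d - φ x) - md x (φ y - φ x)| := by
        have heq : (dist (f y) (f x) - md x (φ y - φ x))
            - (dist (f ↑d) (f x) - md x (φ ↑d - φ x))
            = -(dist (f ↑d) (f x) - dist (f y) (f x)) + (md x (φ ↑d - φ x) - md x (φ y - φ x)) := by
          ring
        calc |(dist (f y) (f x) - md x (φ y - φ x))
            - (dist (f ↑d) (f x) - md x (φ ↑d - φ x))|
            = |-(dist (f ↑d) (f x) - dist (f y) (f x)) + (md x (φ ↑d - φ x) - md x (φ y - φ x))| := by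
              rw [heq]
          _ ≤ |-(dist (f ↑d) (f x) - dist (f y) (f x))| + |md x (φ ↑d - φ x) - md x (φ y - φ x)| :=
              abs_add_le _ _
          _ = |dist (f ↑d) (f x) - dist (f y) (f x)| + |md x (φ ↑d - φ x) - md x (φ y - φ x)| := by
              rw [abs_neg]
      linarith
    have hcdx : c * dist (↑d : X) x ≤ c * dist y x + c * dist (↑d : X) y := by
      have h3 := (abs_le.mp e3).2
      nlinarith
    rw [hhy] at hMdy hhy0
    linarith
  -- covering almost all of U
  have cover : ∀ x ∈ U, x ∈ G → ∃ k m, x ∈ A k m := by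
    intro x hxU hxG
    obtain ⟨s, hs⟩ := hsemi0 x hxU
    have htend := hGtend x hxG
    have hev : (fun y => |dist (f y) (f x) - md x (φ y - φ x)| / dist y x) ⁻¹' (Iio c)
        ∈ 𝓝[U \ {x}] x := htend (Iio_mem_nhds hc0)
    obtain ⟨ε, hε0, hεsub⟩ := Metric.mem_nhdsWithin_iff.mp hev
    obtain ⟨m, hm⟩ := exists_nat_one_div_lt hε0
    refine ⟨⌈Cf x⌉₊, m, hxU, Nat.le_ceil _, ?_⟩
    intro y hyU hyd
    rcases eq_or_ne y x with rfl | hyx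
    · simp [hs, dist_self, sub_self, map_zero]
    · have hymem : y ∈ Metric.ball x ε ∩ (U \ {x}) :=
        ⟨by rw [Metric.mem_ball]; exact lt_trans hyd hm, hyU, hyx⟩
      have hlt := hεsub hymem
      rw [Set.mem_preimage, Set.mem_Iio] at hlt
      have hd0 : 0 < dist y x := dist_pos.mpr hyx
      have := (div_lt_iff₀ hd0).mp hlt
      linarith
  -- measurability of the sets A k m
  have hfsub : Continuous (fun x : ↥U => f ↑x) := by
    have hlip : LipschitzWith L.toNNReal (fun x : ↥U => f ↑x) := by
      apply LipschitzWith.of_dist_le_mul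
      intro a b
      rw [Subtype.dist_eq]
      calc dist (f ↑a) (f ↑b) ≤ L * dist (↑a : X) ↑b := hfLip _ a.2 _ b.2
        _ = ↑L.toNNReal * dist (↑a : X) ↑b := by rw [Real.coe_toNNReal L hL.le]
    exact hlip.continuous
  have hAmeas : ∀ k m, MeasurableSet (A k m) := by
    intro k m
    set SA : Set ↥U := {x : ↥U | Cf ↑x ≤ (k:ℝ)} ∩
      ⋂ d ∈ D, ({x : ↥U | r m ≤ dist (↑d : X) ↑x} ∪
        {x : ↥U | |dist (f ↑d) (f ↑x) - Q d ↑x| ≤ c * dist (↑d : X) ↑x}) with hSA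
    have hSAmeas : MeasurableSet SA := by
      apply MeasurableSet.inter
      · exact measurableSet_le (hCfmeas.comp measurable_subtype_coe) measurable_const
      · apply MeasurableSet.biInter hDc
        intro d _
        have hdistm : Measurable (fun x : ↥U => dist (↑d : X) ↑x) :=
          (continuous_const.dist continuous_subtype_val).measurable
        apply MeasurableSet.union
        · exact measurableSet_le measurable_const hdistm
        · have h1 : Measurable (fun x : ↥U => dist (f ↑d) (f ↑x)) :=
            (continuous_const.dist hfsub).measurable
          have h2 : Measurable (fun x : ↥U => Q d ↑x) :=
            (hQmeas d).comp measurable_subtype_coe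
          exact measurableSet_le ((h1.sub h2).abs) (hdistm.const_mul c)
    have himg : A k m = Subtype.val '' SA := by
      ext x
      constructor
      · rintro ⟨hxU, hCk, hPx⟩
        refine ⟨⟨x, hxU⟩, ⟨hCk, ?_⟩, rfl⟩
        rw [Set.mem_iInter₂]
        intro d hd
        rcases lt_or_ge (dist (↑d : X) x) (r m) with hlt | hge
        · right
          have := hPx ↑d d.2 hlt
          rw [Set.mem_setOf_eq, hQeq d x hxU]
          exact this
        · left; exact hge
      · rintro ⟨⟨z, hzU⟩, ⟨hCk, hcond⟩, rfl⟩
        rw [Set.mem_iInter₂] at hcond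
        refine ⟨hzU, hCk, ?_⟩
        apply bridge m z hzU
        intro d hd hlt
        rcases hcond d hd with hge | hQd
        · exact absurd hlt (not_lt.mpr hge)
        · rw [Set.mem_setOf_eq, hQeq d z hzU] at hQd
          exact hQd
    rw [himg]
    exact (MeasurableEmbedding.subtype_coe hU).measurableSet_image.2 hSAmeas
  -- dense sequence in X and small pieces
  set u : ℕ → X := TopologicalSpace.denseSeq X with hu
  have hud : DenseRange u := TopologicalSpace.denseRange_denseSeq X
  set V0 : ℕ × ℕ × ℕ → Set X :=
    fun p => A p.1 p.2.1 ∩ G ∩ Metric.closedBall (u p.2.2) (r p.2.1 / 3) with hV0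
  have hV0meas : ∀ p, MeasurableSet (V0 p) :=
    fun p => ((hAmeas _ _).inter hGmeas).inter measurableSet_closedBall
  have hV0U : ∀ p, V0 p ⊆ U := fun p x hx => hx.1.1.1
  have hV0bil : ∀ p, ∃ L' : ℝ, 0 < L' ∧ BiLipschitzOn L' φ (V0 p) := by
    rintro ⟨k, m, j⟩
    set L' : ℝ := 2 * L * ((k:ℝ) + 1) + (K : ℝ) + 1 with hL'def
    have hL'0 : 0 < L' := by positivity
    refine ⟨L', hL'0, ?_⟩
    intro x hx z hz
    obtain ⟨⟨hxA, hxG⟩, hxB⟩ := hx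
    obtain ⟨⟨hzA, hzG⟩, hzB⟩ := hz
    obtain ⟨hxU, hxC, hxP⟩ := hxA
    obtain ⟨hzU, _, _⟩ := hzA
    have hKL' : (K : ℝ) ≤ L' := by
      have : 0 < 2 * L * ((k:ℝ) + 1) := by positivity
      rw [hL'def]; linarith
    have hup : dist (φ x) (φ z) ≤ L' * dist x z :=
      calc dist (φ x) (φ z) ≤ (K : ℝ) * dist x z := hK.dist_le_mul _ _
        _ ≤ L' * dist x z := mul_le_mul_of_nonneg_right hKL' dist_nonneg
    refine ⟨?_, hup⟩
    rcases eq_or_ne z x with rfl | hzx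
    · simp
    · have hdxz : dist x z < r m := by
        have hx1 : dist x (u j) ≤ r m / 3 := Metric.mem_closedBall.mp hxB
        have hz1 : dist (u j) z ≤ r m / 3 := by
          rw [dist_comm]; exact Metric.mem_closedBall.mp hzB
        calc dist x z ≤ dist x (u j) + dist (u j) z := dist_triangle _ _ _
          _ ≤ r m / 3 + r m / 3 := add_le_add hx1 hz1
          _ < r m := by linarith [hr0 m]
      have hPz := hxP z hzU (by rwa [dist_comm])
      obtain ⟨s, hs⟩ := hsemi0 x hxU
      have hsle : ∀ v, s v ≤ Cf x * ‖v‖ := fun v => by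
        rw [hCf_eq x hxU s hs]; exact seminorm_le_sum_mul_norm s v
      rw [hs] at hPz
      have h1 := (hbil x hxU z hzU).1
      have hdc : dist (f z) (f x) = dist (f x) (f z) := dist_comm _ _
      have hdc2 : dist z x = dist x z := dist_comm _ _
      have hPz' := (abs_le.mp hPz).2
      have hlow1 : c * dist x z ≤ s (φ z - φ x) := by
        rw [hdc, hdc2] at hPz'
        rw [hLinv] at h1
        linarith
      have hCk1 : Cf x ≤ (k:ℝ) + 1 := by
        have : ((k:ℝ)) ≤ (k:ℝ) + 1 := by linarith
        linarith
      have hnorm : c * dist x z ≤ ((k:ℝ) + 1) * ‖φ z - φ x‖ := by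
        have h2 := hsle (φ z - φ x)
        have h3 : Cf x * ‖φ z - φ x‖ ≤ ((k:ℝ) + 1) * ‖φ z - φ x‖ :=
          mul_le_mul_of_nonneg_right hCk1 (norm_nonneg _)
        linarith
      have hd : dist (φ x) (φ z) = ‖φ z - φ x‖ := by
        rw [dist_comm, dist_eq_norm]
      rw [hd, inv_mul_le_iff₀ hL'0, hL'def]
      have hint1 : 2 * L * (c * dist x z) ≤ 2 * L * (((k:ℝ) + 1) * ‖φ z - φ x‖) :=
        mul_le_mul_of_nonneg_left hnorm (by positivity : (0:ℝ) ≤ 2 * L)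
      have hdist_eq : 2 * L * (c * dist x z) = dist x z := by
        rw [← mul_assoc, h2Lc, one_mul]
      have key2 : dist x z ≤ 2 * L * (((k:ℝ) + 1) * ‖φ z - φ x‖) := by
        rw [← hdist_eq]; exact hint1
      have hK1 : (0:ℝ) ≤ ((K:ℝ) + 1) * ‖φ z - φ x‖ :=
        mul_nonneg (by positivity) (norm_nonneg _)
      have hexp : (2 * L * ((k:ℝ) + 1) + (K:ℝ) + 1) * ‖φ z - φ x‖
          = 2 * L * (((k:ℝ) + 1) * ‖φ z - φ x‖) + ((K:ℝ) + 1) * ‖φ z - φ x‖ := by ring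
      linarith [key2, hK1, hexp]
  -- assemble
  set e : ℕ ≃ ℕ × ℕ × ℕ := (Denumerable.eqv (ℕ × ℕ × ℕ)).symm with he
  set W : ℕ → Set X := fun i => V0 (e i) with hW
  set V : ℕ → Set X := disjointed W with hV
  have hVW : ∀ i, V i ⊆ W i := fun i => disjointed_subset W i
  have hUV : (⋃ i, V i) = ⋃ p, V0 p := by
    rw [hV, iUnion_disjointed]
    apply Set.Subset.antisymm
    · exact Set.iUnion_subset fun i => Set.subset_iUnion V0 (e i)
    · refine Set.iUnion_subset fun p => ?_
      have h0 : V0 p = W (e.symm p) := congrArg V0 (e.apply_symm_apply p).symm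
      rw [h0]; exact Set.subset_iUnion W _
  have hVsubU : (⋃ i, V i) ⊆ U := by rw [hUV]; exact Set.iUnion_subset hV0U
  refine ⟨U \ ⋃ i, V i, V, (Set.diff_union_of_subset hVsubU).symm, ?_, ?_, ?_, ?_, ?_⟩
  · have hsub : U \ ⋃ i, V i ⊆ U \ G := by
      intro x hx
      refine ⟨hx.1, fun hxG => hx.2 ?_⟩
      obtain ⟨k, m, hkm⟩ := cover x hx.1 hxG
      obtain ⟨j, hj⟩ := hud.exists_dist_lt x (by positivity : (0:ℝ) < r m / 3)
      rw [hUV]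
      exact Set.mem_iUnion.mpr ⟨(k, m, j), ⟨hkm, hxG⟩, Metric.mem_closedBall.mpr hj.le⟩
    exact measure_mono_null hsub hUG
  · exact disjoint_disjointed W
  · intro i
    exact Set.disjoint_left.mpr fun x hxZ hxV => hxZ.2 (Set.mem_iUnion.mpr ⟨i, hxV⟩)
  · exact fun i => MeasurableSet.disjointed (fun j => hV0meas _) i
  · intro i
    obtain ⟨L', hL'0, hbl⟩ := hV0bil (e i)
    exact ⟨L', hL'0, fun x hx y hy => hbl x (hVW i hx) y (hVW i hy)⟩


end
end

section
/- Let (X,d,μ) be a metric measure space and (U,φ) a weak Cheeger chart of dimension n on X. Then for μ-a.e. x ∈ U, the map λ ↦ Lip((λ∘φ)|_U)(x) is a norm on the dual space (ℝⁿ)*; in particular it is positive on every nonzero λ ∈ (ℝⁿ)*. -/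
open MeasureTheory Filter Set Metric
open scoped ENNReal NNReal Topology RealInnerProductSpace

noncomputable section

section AuxLip

private lemma quot_nonneg' {X : Type*} [MetricSpace X] (g : X → ℝ) (x y : X) :
    0 ≤ dist (g y) (g x) / dist y x := div_nonneg dist_nonneg dist_nonneg

private lemma quot_le_of_lipschitz {X : Type*} [MetricSpace X] {g : X → ℝ} {C : ℝ≥0}
    (hg : LipschitzWith C g) (x y : X) :
    dist (g y) (g x) / dist y x ≤ C := by
  rcases eq_or_ne y x with rfl | hyx
  · simpa using C.coe_nonneg
  · rw [div_le_iff₀ (dist_pos.2 hyx)]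
    exact hg.dist_le_mul y x

private lemma limsup_const_mul_nonneg {X : Type*} {F : Filter X} [F.NeBot] {u : X → ℝ} {c C : ℝ}
    (hc : 0 ≤ c) (h0 : ∀ y, 0 ≤ u y) (hC : ∀ y, u y ≤ C) :
    Filter.limsup (fun y => c * u y) F = c * Filter.limsup u F := by
  rcases hc.eq_or_lt with rfl | hc
  · simp only [zero_mul]
    exact Filter.limsup_const (0 : ℝ)
  · have hb : F.IsBoundedUnder (· ≤ ·) u := isBoundedUnder_of ⟨C, hC⟩
    have hco : F.IsCoboundedUnder (· ≤ ·) u :=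
      Filter.IsBoundedUnder.isCoboundedUnder_le (isBoundedUnder_of ⟨0, h0⟩)
    have hb' : F.IsBoundedUnder (· ≤ ·) fun y => c * u y :=
      isBoundedUnder_of ⟨c * C, fun y => mul_le_mul_of_nonneg_left (hC y) hc.le⟩
    have hco' : F.IsCoboundedUnder (· ≤ ·) fun y => c * u y :=
      Filter.IsBoundedUnder.isCoboundedUnder_le
        (isBoundedUnder_of ⟨0, fun y => mul_nonneg hc.le (h0 y)⟩)
    exact ((OrderIso.mulLeft₀ c hc).limsup_apply hb hco hb' hco').symm

end AuxLip

/-- **Lemma:** on a weak Cheeger chart `(U, φ)`, for `μ`-a.e. `x ∈ U` the map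
`λ ↦ Lip((λ ∘ φ)|_U)(x)` is a norm on `(ℝⁿ)*`; in particular it is positive on every
nonzero functional. -/
theorem lip_is_norm_on_dual {X : Type*} [MetricSpace X] [CompleteSpace X] [TopologicalSpace.SeparableSpace X]
    [MeasurableSpace X] [BorelSpace X]
    (μ : Measure X) (hμ : ∀ s : Set X, Bornology.IsBounded s → μ s ≠ ∞)
    {n : ℕ} (U : Set X) (φ : X → Euc n) (hw : IsWeakCheegerChart μ U φ) :
    ∀ᵐ x ∂μ.restrict U,
      (∀ lam : Euc n →ₗ[ℝ] ℝ, 0 ≤ lipWithin (fun y => lam (φ y)) U x) ∧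
      (∀ (lam : Euc n →ₗ[ℝ] ℝ) (c : ℝ),
        lipWithin (fun y => (c • lam) (φ y)) U x = |c| * lipWithin (fun y => lam (φ y)) U x) ∧
      (∀ lam lam' : Euc n →ₗ[ℝ] ℝ,
        lipWithin (fun y => (lam + lam') (φ y)) U x ≤
          lipWithin (fun y => lam (φ y)) U x + lipWithin (fun y => lam' (φ y)) U x) ∧
      (∀ lam : Euc n →ₗ[ℝ] ℝ, lam ≠ 0 → 0 < lipWithin (fun y => lam (φ y)) U x) := by
  obtain ⟨⟨hUmeas, hUpos, K, hK⟩, hch⟩ := hw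
  rcases eq_or_ne n 0 with hn | hn
  · subst hn
    refine Eventually.of_forall fun x => ?_
    have hlam0 : ∀ lam : Euc 0 →ₗ[ℝ] ℝ, lam = 0 := fun lam => by
      ext v
      rw [Subsingleton.elim v 0]
      simp
    have hzero : ∀ lam : Euc 0 →ₗ[ℝ] ℝ, lipWithin (fun y => lam (φ y)) U x = 0 := by
      intro lam
      have hfun : (fun y => dist (lam (φ y)) (lam (φ x)) / dist y x) = fun _ => (0 : ℝ) := by
        funext y
        rw [hlam0 lam]
        simp
      rw [lipWithin, hfun]
      rcases (𝓝[U \ {x}] x).eq_or_neBot with hF | hF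
      · rw [hF, Filter.limsup_eq]
        simp only [eventually_bot, Set.setOf_true]
        exact Real.sInf_of_not_bddBelow (by simpa using not_bddBelow_univ)
      · exact Filter.limsup_const (0 : ℝ)
    refine ⟨fun lam => (hzero lam).ge, fun lam c => ?_, fun lam lam' => ?_, fun lam hne => ?_⟩
    · rw [hzero, hzero, mul_zero]
    · rw [hzero, hzero, hzero]; norm_num
    · exact absurd (hlam0 lam) hne
  -- main case : n ≠ 0
  have hnpos : 0 < n := Nat.pos_of_ne_zero hn
  set prL : Fin n → (Euc n →ₗ[ℝ] ℝ) :=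
    fun i => (EuclideanSpace.proj i : Euc n →L[ℝ] ℝ).toLinearMap with hprL
  have hlipPr : ∀ i : Fin n, LipschitzWith (‖(EuclideanSpace.proj i : Euc n →L[ℝ] ℝ)‖₊ * K)
      (fun y => prL i (φ y)) :=
    fun i => (EuclideanSpace.proj i : Euc n →L[ℝ] ℝ).lipschitz.comp hK
  have haeU : ∀ᵐ x ∂μ.restrict U, ∀ i : Fin n, ∃! L : Euc n →ₗ[ℝ] ℝ,
      Tendsto (fun y => |prL i (φ y) - prL i (φ x) - L (φ y - φ x)| / dist y x)
        (𝓝[U \ {x}] x) (𝓝 0) :=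
    (ae_all_iff).2 fun i => hch _ _ (hlipPr i)
  filter_upwards [haeU] with x hx
  set F := 𝓝[U \ {x}] x with hF
  -- the filter is nontrivial
  have hFne : F.NeBot := by
    rcases F.eq_or_neBot with hbot | h
    · exfalso
      have h1 : Tendsto (fun y => |prL ⟨0, hnpos⟩ (φ y) - prL ⟨0, hnpos⟩ (φ x) -
          (prL ⟨0, hnpos⟩) (φ y - φ x)| / dist y x) F (𝓝 0) := by
        rw [hbot]; exact tendsto_bot
      have h2 : Tendsto (fun y => |prL ⟨0, hnpos⟩ (φ y) - prL ⟨0, hnpos⟩ (φ x) -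
          (0 : Euc n →ₗ[ℝ] ℝ) (φ y - φ x)| / dist y x) F (𝓝 0) := by
        rw [hbot]; exact tendsto_bot
      have heq := ((hx ⟨0, hnpos⟩).unique h1 h2)
      have := congrArg (fun L : Euc n →ₗ[ℝ] ℝ => L (EuclideanSpace.single ⟨0, hnpos⟩ 1)) heq
      simp [hprL] at this
    · exact h
  -- quotient functions and their bounds
  set q : (Euc n →ₗ[ℝ] ℝ) → X → ℝ :=
    fun lam y => dist (lam (φ y)) (lam (φ x)) / dist y x with hq
  have hlipL : ∀ lam : Euc n →ₗ[ℝ] ℝ,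
      LipschitzWith (‖LinearMap.toContinuousLinearMap lam‖₊ * K) (fun y => lam (φ y)) :=
    fun lam => (LinearMap.toContinuousLinearMap lam).lipschitz.comp hK
  have hq0 : ∀ lam, ∀ y, 0 ≤ q lam y := fun lam y => quot_nonneg' (fun y => lam (φ y)) x y
  have hqC : ∀ lam : Euc n →ₗ[ℝ] ℝ, ∀ y,
      q lam y ≤ (‖LinearMap.toContinuousLinearMap lam‖₊ * K : ℝ≥0) :=
    fun lam y => quot_le_of_lipschitz (hlipL lam) x y
  have hb : ∀ lam, F.IsBoundedUnder (· ≤ ·) (q lam) :=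
    fun lam => isBoundedUnder_of ⟨_, hqC lam⟩
  have hge : ∀ lam, F.IsBoundedUnder (· ≥ ·) (q lam) :=
    fun lam => isBoundedUnder_of ⟨0, hq0 lam⟩
  have hco : ∀ lam, F.IsCoboundedUnder (· ≤ ·) (q lam) :=
    fun lam => (hge lam).isCoboundedUnder_le
  have hlipdef : ∀ lam : Euc n →ₗ[ℝ] ℝ,
      lipWithin (fun y => lam (φ y)) U x = Filter.limsup (q lam) F := fun lam => rfl
  have hnonneg : ∀ lam : Euc n →ₗ[ℝ] ℝ, 0 ≤ lipWithin (fun y => lam (φ y)) U x := by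
    intro lam
    rw [hlipdef]
    exact le_limsup_of_frequently_le (Eventually.frequently (Eventually.of_forall (hq0 lam)))
      (hb lam)
  refine ⟨hnonneg, ?_, ?_, ?_⟩
  · -- homogeneity
    intro lam c
    have hfun : q (c • lam) = fun y => |c| * q lam y := by
      funext y
      simp only [hq, LinearMap.smul_apply, smul_eq_mul, Real.dist_eq, ← mul_sub, abs_mul]
      ring
    rw [hlipdef (c • lam), hlipdef lam, hfun]
    exact limsup_const_mul_nonneg (abs_nonneg c) (hq0 lam) (hqC lam)
  · -- subadditivity
    intro lam lam'
    have hptw : ∀ y, q (lam + lam') y ≤ q lam y + q lam' y := by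
      intro y
      calc q (lam + lam') y
          = dist (lam (φ y) + lam' (φ y)) (lam (φ x) + lam' (φ x)) / dist y x := rfl
        _ ≤ (dist (lam (φ y)) (lam (φ x)) + dist (lam' (φ y)) (lam' (φ x))) / dist y x := by
            gcongr
            exact dist_add_add_le _ _ _ _
        _ = q lam y + q lam' y := add_div _ _ _
    rw [hlipdef, hlipdef, hlipdef]
    calc Filter.limsup (q (lam + lam')) F
        ≤ Filter.limsup (q lam + q lam') F :=
          limsup_le_limsup (Eventually.of_forall hptw) (hco _)
            (isBoundedUnder_le_add (hb lam) (hb lam'))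
      _ ≤ Filter.limsup (q lam) F + Filter.limsup (q lam') F :=
          limsup_add_le (hge lam) (hb lam) (hco lam') (hb lam')
  · -- positivity
    intro lam hne
    by_contra hpos
    have h0 : Filter.limsup (q lam) F = 0 :=
      le_antisymm (by rw [hlipdef] at hpos; exact not_lt.1 hpos) (by
        rw [← hlipdef]; exact hnonneg lam)
    obtain ⟨i, hi⟩ : ∃ i : Fin n, lam (EuclideanSpace.single i 1) ≠ 0 := by
      by_contra h
      push_neg at h
      refine hne ?_
      apply Module.Basis.ext (EuclideanSpace.basisFun (Fin n) ℝ).toBasis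
      intro i
      simp [EuclideanSpace.basisFun_apply, h i]
    have htend : Tendsto (q lam) F (𝓝 0) := by
      refine tendsto_of_le_liminf_of_limsup_le ?_ h0.le (hb lam) (hge lam)
      exact le_liminf_of_le ((hb lam).isCoboundedUnder_ge)
        (Eventually.of_forall (hq0 lam))
    set c : ℝ := lam (EuclideanSpace.single i 1) with hc
    have hL1 : Tendsto (fun y => |prL i (φ y) - prL i (φ x) - (prL i) (φ y - φ x)| / dist y x)
        F (𝓝 0) := by
      have : (fun y => |prL i (φ y) - prL i (φ x) - (prL i) (φ y - φ x)| / dist y x)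
          = fun _ => (0 : ℝ) := by
        funext y
        rw [map_sub]
        simp
      rw [this]
      exact tendsto_const_nhds
    have hL2 : Tendsto (fun y => |prL i (φ y) - prL i (φ x) -
        (prL i - c⁻¹ • lam) (φ y - φ x)| / dist y x) F (𝓝 0) := by
      have heq : (fun y => |prL i (φ y) - prL i (φ x) -
          (prL i - c⁻¹ • lam) (φ y - φ x)| / dist y x)
          = fun y => |c⁻¹| * q lam y := by
        funext y
        rw [LinearMap.sub_apply, map_sub (prL i), LinearMap.smul_apply, smul_eq_mul, map_sub lam]
        have : prL i (φ y) - prL i (φ x) - (prL i (φ y) - prL i (φ x) -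
            c⁻¹ * (lam (φ y) - lam (φ x))) = c⁻¹ * (lam (φ y) - lam (φ x)) := by ring
        rw [this, abs_mul]
        simp only [hq, Real.dist_eq]
        ring
      rw [heq]
      have := htend.const_mul |c⁻¹|
      simpa using this
    have heqL := (hx i).unique hL1 hL2
    have hsub : c⁻¹ • lam = 0 := by
      have := sub_eq_self.mp heqL.symm
      exact this
    rcases smul_eq_zero.mp hsub with h | h
    · exact inv_ne_zero hi h
    · exact hne h


end
end

section
/- Let (X,d,μ) be a metric measure space, (U,φ) an n-dimensional chart on X, a < b reals, and h : ℝ → (a,b) a Lipschitz bijection whose inverse h⁻¹ : (a,b) → ℝ is differentiable. Let f : U → ℝ be a function such that h∘f is Lipschitz and admits a metric differential md(h∘f) with respect to (U,φ). Then f admits a metric differential with respect to (U,φ), given μ-a.e. on U by md_x f = |(h⁻¹)'(h(f(x)))| · md_x(h∘f). -/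
open MeasureTheory Filter Set Metric
open scoped ENNReal NNReal Topology RealInnerProductSpace

noncomputable section

/-- **Lemma (from the proof of Lemma 4.1):** if `h : ℝ → (a,b)` is a Lipschitz bijection
with differentiable inverse and `h ∘ f` admits a metric differential w.r.t. `(U, φ)`, then
so does `f`, given a.e. by `md_x f = |(h⁻¹)'(h(f x))| · md_x (h ∘ f)`. -/
theorem metric_diff_of_comp {X : Type*} [MetricSpace X] [CompleteSpace X] [TopologicalSpace.SeparableSpace X]
    [MeasurableSpace X] [BorelSpace X]
    (μ : Measure X) (hμ : ∀ s : Set X, Bornology.IsBounded s → μ s ≠ ∞)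
    {n : ℕ} (U : Set X) (φ : X → Euc n) (hchart : IsChart μ U φ)
    {a b : ℝ} (hab : a < b) (h : ℝ → ℝ) (Kh : ℝ≥0) (hh : LipschitzWith Kh h)
    (hbij : Set.BijOn h Set.univ (Set.Ioo a b))
    (g : ℝ → ℝ) (hg : ∀ t, g (h t) = t)
    (g' : ℝ → ℝ) (hg' : ∀ s ∈ Set.Ioo a b, HasDerivAt g (g' s) s)
    (f : X → ℝ) (K : ℝ≥0) (hhf : LipschitzOnWith K (h ∘ f) U)
    (md' : X → Euc n → ℝ) (hsem : ∀ x ∈ U, IsSeminormFn (md' x))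
    (hmd' : ∀ᵐ x ∂μ.restrict U,
      Tendsto (fun y => abs (|h (f y) - h (f x)| - md' x (φ y - φ x)) / dist y x)
        (𝓝[U \ {x}] x) (𝓝 0)) :
    (∀ x ∈ U, IsSeminormFn (fun v => |g' (h (f x))| * md' x v)) ∧
    ∀ᵐ x ∂μ.restrict U,
      Tendsto (fun y => abs (|f y - f x| - |g' (h (f x))| * md' x (φ y - φ x)) / dist y x)
        (𝓝[U \ {x}] x) (𝓝 0) := by
  constructor
  · intro x hx
    obtain ⟨s, hs⟩ := hsem x hx
    refine ⟨(|g' (h (f x))|).toNNReal • s, fun v => ?_⟩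
    show |g' (h (f x))| * md' x v = _
    rw [hs v, Seminorm.smul_apply, NNReal.smul_def, smul_eq_mul,
      Real.coe_toNNReal _ (abs_nonneg _)]
  · have hU : MeasurableSet U := hchart.1
    filter_upwards [hmd', ae_restrict_mem hU] with x hx hxU
    have hsab : h (f x) ∈ Set.Ioo a b := hbij.mapsTo (mem_univ (f x))
    have hderiv : HasDerivAt g (g' (h (f x))) (h (f x)) := hg' _ hsab
    set c := g' (h (f x)) with hc
    set L := 𝓝[U \ {x}] x with hL
    have hcont : Tendsto (fun y => h (f y)) L (𝓝 (h (f x))) := by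
      have := (hhf.continuousOn x hxU).tendsto
      exact this.mono_left (nhdsWithin_mono x diff_subset)
    have hmemU : ∀ᶠ y in L, y ∈ U :=
      eventually_nhdsWithin_of_forall (fun y hy => hy.1)
    have h1 : (fun t => g t - g (h (f x)) - (t - h (f x)) * c) =o[𝓝 (h (f x))]
        (fun t => t - h (f x)) := by
      have := hderiv.isLittleO
      simpa [smul_eq_mul] using this
    have h2 : (fun y => f y - f x - (h (f y) - h (f x)) * c) =o[L]
        (fun y => h (f y) - h (f x)) := by
      have := h1.comp_tendsto hcont
      simpa [Function.comp_def, hg] using this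
    have h3 : (fun y => h (f y) - h (f x)) =O[L] (fun y => dist y x) := by
      rw [Asymptotics.isBigO_iff]
      refine ⟨K, ?_⟩
      filter_upwards [hmemU] with y hy
      have := hhf hy hxU
      rw [edist_dist, edist_dist, Function.comp] at this
      have h' : dist (h (f y)) (h (f x)) ≤ K * dist y x := by
        rw [← ENNReal.ofReal_coe_nnreal, ← ENNReal.ofReal_mul (by positivity)] at this
        exact (ENNReal.ofReal_le_ofReal_iff (by positivity)).1 this
      rw [Real.dist_eq] at h'
      rw [Real.norm_eq_abs, Real.norm_eq_abs, abs_of_nonneg (dist_nonneg : (0:ℝ) ≤ dist y x)]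
      exact h'
    have h4 := h2.trans_isBigO h3
    have hF : Tendsto (fun y => |f y - f x - (h (f y) - h (f x)) * c| / dist y x)
        L (𝓝 0) := by
      have := h4.tendsto_div_nhds_zero
      have habs := this.abs
      simp only [abs_zero] at habs
      refine habs.congr (fun y => ?_)
      rw [abs_div, abs_of_nonneg (dist_nonneg : (0:ℝ) ≤ dist y x)]
    have hG : Tendsto (fun y =>
        |c| * (|(|h (f y) - h (f x)|) - md' x (φ y - φ x)| / dist y x)) L (𝓝 0) := by
      have := hx.const_mul |c|
      simpa using this
    refine squeeze_zero' (Filter.Eventually.of_forall fun y => by positivity) ?_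
      (by simpa using hF.add hG)
    filter_upwards with y
    have key : abs (|f y - f x| - |c| * md' x (φ y - φ x)) ≤
        abs (f y - f x - (h (f y) - h (f x)) * c) +
        |c| * abs (|h (f y) - h (f x)| - md' x (φ y - φ x)) := by
      have t1 : abs (|f y - f x| - abs ((h (f y) - h (f x)) * c)) ≤
          abs (f y - f x - (h (f y) - h (f x)) * c) := abs_abs_sub_abs_le_abs_sub _ _
      have t3 : abs (abs ((h (f y) - h (f x)) * c) - |c| * md' x (φ y - φ x)) =
          |c| * abs (|h (f y) - h (f x)| - md' x (φ y - φ x)) := by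
        rw [abs_mul, mul_comm, ← mul_sub, abs_mul, abs_abs]
      calc abs (|f y - f x| - |c| * md' x (φ y - φ x))
          ≤ abs (|f y - f x| - abs ((h (f y) - h (f x)) * c)) +
            abs (abs ((h (f y) - h (f x)) * c) - |c| * md' x (φ y - φ x)) :=
            abs_sub_le _ _ _
        _ ≤ _ := by rw [t3]; exact add_le_add t1 le_rfl
    have h5 := mul_le_mul_of_nonneg_right key
      (inv_nonneg.2 (dist_nonneg : (0:ℝ) ≤ dist y x))
    calc abs (|f y - f x| - |c| * md' x (φ y - φ x)) / dist y x
        = abs (|f y - f x| - |c| * md' x (φ y - φ x)) * (dist y x)⁻¹ := by ring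
      _ ≤ (abs (f y - f x - (h (f y) - h (f x)) * c) +
            |c| * abs (|h (f y) - h (f x)| - md' x (φ y - φ x))) * (dist y x)⁻¹ := h5
      _ = abs (f y - f x - (h (f y) - h (f x)) * c) / dist y x +
            |c| * (abs (|h (f y) - h (f x)| - md' x (φ y - φ x)) / dist y x) := by ring

end
end
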